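/- Let K ≥ 2, let θ : {1,…,K} → ℝ have a unique best arm I* (θ_{I*} > θ_j for all j ≠ I*), and let σ : {1,…,K} → ℝ be strictly positive. For strictly positive p in the probability simplex S_K and j ≠ I*, define C_j(p) = (θ_{I*} − θ_j)² / (2(σ_{I*}²/p_{I*} + σ_j²/p_j)), and define the selection functions h^j by h^j_{I*}(p) = (σ_{I*}²/p_{I*})/(σ_{I*}²/p_{I*} + σ_j²/p_j), h^j_j(p) = (σ_j²/p_j)/(σ_{I*}²/p_{I*} + σ_j²/p_j), and h^j_k(p) = 0 for k ∉ {I*, j}. Then a component-wise strictly positive p ∈ S_K maximizes p' ↦ min_{j ≠ I*} C_j(p') over S_K if and only if there exist nonnegative dual variables (μ_j)_{j ≠ I*} with Σ_{j ≠ I*} μ_j = 1 such that (stationarity) p_i = Σ_{j ≠ I*} μ_j h^j_i(p) for every i ∈ {1,…,K}, and (complementary slackness) μ_j · (min_{j' ≠ I*} C_{j'}(p) − C_j(p)) = 0 for every j ≠ I*. -/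

import Mathlib

open Filter Topology Finset

lemma aux_super (Δ a b pI pj qI qj : ℝ) (ha : 0 < a) (hb : 0 < b) (hΔ : 0 ≤ Δ)
    (hpI : 0 < pI) (hpj : 0 < pj) (hqI : 0 ≤ qI) (hqj : 0 ≤ qj) :
    Δ * qI * qj / (2 * (a * qj + b * qI)) ≤
      Δ * a * pj ^ 2 / (2 * (a * pj + b * pI) ^ 2) * qI
        + Δ * b * pI ^ 2 / (2 * (a * pj + b * pI) ^ 2) * qj := by
  have hD : 0 < 2 * (a * pj + b * pI) ^ 2 := by positivity
  rcases eq_or_lt_of_le (by positivity : (0:ℝ) ≤ 2 * (a * qj + b * qI)) with hE | hE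
  · rw [← hE, div_zero]
    positivity
  · have hr : Δ * a * pj ^ 2 / (2 * (a * pj + b * pI) ^ 2) * qI
        + Δ * b * pI ^ 2 / (2 * (a * pj + b * pI) ^ 2) * qj
        = (Δ * a * pj ^ 2 * qI + Δ * b * pI ^ 2 * qj) / (2 * (a * pj + b * pI) ^ 2) := by
      field_simp
    rw [hr, div_le_div_iff₀ hE hD]
    nlinarith [mul_nonneg (mul_nonneg hΔ (mul_pos ha hb).le) (sq_nonneg (pj * qI - pI * qj)), sq_nonneg (a*pj+b*pI)]

lemma aux_deriv (Δ a b pI pj dI dj : ℝ) (hD : (2:ℝ) * (a * pj + b * pI) ≠ 0) :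
    HasDerivAt (fun t : ℝ => Δ * (pI + t * dI) * (pj + t * dj) /
        (2 * (a * (pj + t * dj) + b * (pI + t * dI))))
      (Δ * a * pj ^ 2 / (2 * (a * pj + b * pI) ^ 2) * dI
        + Δ * b * pI ^ 2 / (2 * (a * pj + b * pI) ^ 2) * dj) 0 := by
  have h1 : HasDerivAt (fun t : ℝ => pI + t * dI) dI 0 := by
    simpa using (hasDerivAt_id (0:ℝ)).mul_const dI |>.const_add pI
  have h2 : HasDerivAt (fun t : ℝ => pj + t * dj) dj 0 := by
    simpa using (hasDerivAt_id (0:ℝ)).mul_const dj |>.const_add pj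
  have hN : HasDerivAt (fun t : ℝ => Δ * (pI + t * dI) * (pj + t * dj))
      (Δ * dI * (pj + 0 * dj) + Δ * (pI + 0 * dI) * dj) 0 := by
    exact ((h1.const_mul Δ).mul h2)
  have hM : HasDerivAt (fun t : ℝ => 2 * (a * (pj + t * dj) + b * (pI + t * dI)))
      (2 * (a * dj + b * dI)) 0 := by
    exact (((h2.const_mul a).add (h1.const_mul b)).const_mul 2)
  have hM0 : (2 : ℝ) * (a * (pj + 0 * dj) + b * (pI + 0 * dI)) ≠ 0 := by
    simpa using hD
  have := hN.div hM hM0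
  convert this using 1
  · rfl
  · rfl
  · rfl
  have hD2 : (a * pj + b * pI) ≠ 0 := by
    intro h; apply hD; rw [h]; ring
  simp only [zero_mul, add_zero]
  rw [div_mul_eq_mul_div, div_mul_eq_mul_div, ← add_div,
    div_eq_div_iff (mul_ne_zero two_ne_zero (pow_ne_zero 2 hD2)) (pow_ne_zero 2 hD)]
  ring

lemma aux_incr {f : ℝ → ℝ} {c : ℝ} (hf : HasDerivAt f c 0) (hc : 0 < c) :
    ∀ᶠ t in 𝓝[>] (0:ℝ), f 0 < f t := by
  have h := hasDerivAt_iff_tendsto_slope.mp hf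
  have h2 : ∀ᶠ t in 𝓝[≠] (0:ℝ), 0 < slope f 0 t :=
    h (Ioi_mem_nhds hc)
  have h3 : 𝓝[>] (0:ℝ) ≤ 𝓝[≠] (0:ℝ) :=
    nhdsWithin_mono _ (fun x hx => ne_of_gt hx)
  filter_upwards [h3 h2, self_mem_nhdsWithin] with t ht ht0
  have : 0 < (f t - f 0) / (t - 0) := by simpa [slope_def_field, div_eq_div_iff] using ht
  have ht0' : (0:ℝ) < t := ht0
  have h4 := mul_pos this (by linarith : (0:ℝ) < t - 0)
  rw [div_mul_cancel₀] at h4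
  · linarith
  · linarith

set_option maxHeartbeats 1000000 in
theorem stmt15 (K : ℕ) (hK : 2 ≤ K) (θ σ : Fin K → ℝ) (Istar : Fin K)
    (hbest : ∀ j, j ≠ Istar → θ j < θ Istar) (hσ : ∀ i, 0 < σ i)
    (p : Fin K → ℝ) (hp : ∀ i, 0 < p i) (hsum : ∑ i, p i = 1) :
    let C : Fin K → (Fin K → ℝ) → ℝ := fun j q =>
      (θ Istar - θ j) ^ 2 * q Istar * q j / (2 * (σ Istar ^ 2 * q j + σ j ^ 2 * q Istar))
    let S : Set (Fin K → ℝ) := {q | (∀ i, 0 ≤ q i) ∧ ∑ i, q i = 1}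
    let Γ : (Fin K → ℝ) → ℝ := fun q => ⨅ j : {j : Fin K // j ≠ Istar}, C j q
    let h : Fin K → Fin K → ℝ := fun j i =>
      if i = Istar then (σ Istar ^ 2 / p Istar) / (σ Istar ^ 2 / p Istar + σ j ^ 2 / p j)
      else if i = j then (σ j ^ 2 / p j) / (σ Istar ^ 2 / p Istar + σ j ^ 2 / p j)
      else 0
    (IsMaxOn Γ S p ↔
      ∃ μ : Fin K → ℝ, (∀ j, j ≠ Istar → 0 ≤ μ j) ∧
        (∑ j ∈ Finset.univ.filter (· ≠ Istar), μ j = 1) ∧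
        (∀ i : Fin K, p i = ∑ j ∈ Finset.univ.filter (· ≠ Istar), μ j * h j i) ∧
        (∀ j, j ≠ Istar → μ j * (Γ p - C j p) = 0)) := by
  intro C S Γ h
  have hC : ∀ j q, C j q =
      (θ Istar - θ j) ^ 2 * q Istar * q j / (2 * (σ Istar ^ 2 * q j + σ j ^ 2 * q Istar)) :=
    fun _ _ => rfl
  have hΓdef : ∀ q, Γ q = ⨅ j : {j : Fin K // j ≠ Istar}, C j q := fun _ => rfl
  -- nonempty index type
  obtain ⟨j0, hj0⟩ : ∃ j : Fin K, j ≠ Istar := by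
    have : 1 < Fintype.card (Fin K) := by rw [Fintype.card_fin]; omega
    exact Fintype.exists_ne_of_one_lt_card this Istar
  haveI : Nonempty {j : Fin K // j ≠ Istar} := ⟨⟨j0, hj0⟩⟩
  -- basic quantities
  set a : ℝ := σ Istar ^ 2 with ha_def
  have ha : 0 < a := pow_pos (hσ Istar) 2
  set Δf : Fin K → ℝ := fun j => (θ Istar - θ j) ^ 2 with hΔf_def
  set bf : Fin K → ℝ := fun j => σ j ^ 2 with hbf_def
  have hb : ∀ j, 0 < bf j := fun j => by
    simp only [hbf_def]; exact pow_pos (hσ j) 2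
  set Df : Fin K → ℝ := fun j => a * p j + bf j * p Istar with hDf_def
  have hD : ∀ j, 0 < Df j := fun j => by
    simp only [hDf_def]
    exact add_pos (mul_pos ha (hp j)) (mul_pos (hb j) (hp Istar))
  have hΔ : ∀ j, j ≠ Istar → 0 < Δf j := fun j hj => by
    have h1 : θ Istar - θ j ≠ 0 := sub_ne_zero.2 (ne_of_gt (hbest j hj))
    simp only [hΔf_def]
    positivity
  set gI : Fin K → ℝ := fun j => Δf j * a * p j ^ 2 / (2 * (Df j) ^ 2) with hgI_def
  set gJ : Fin K → ℝ := fun j => Δf j * bf j * p Istar ^ 2 / (2 * (Df j) ^ 2) with hgJ_def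
  set g : Fin K → Fin K → ℝ :=
    fun j i => if i = Istar then gI j else if i = j then gJ j else 0 with hg_def
  -- value of C at p
  have hCp : ∀ j, C j p = Δf j * p Istar * p j / (2 * Df j) := fun j => by
    rw [hC]
  have hCppos : ∀ j, j ≠ Istar → 0 < C j p := fun j hj => by
    rw [hCp]
    exact div_pos (mul_pos (mul_pos (hΔ j hj) (hp Istar)) (hp j))
      (by linarith [hD j])
  -- Gamma basics
  have hbdd : ∀ q, BddBelow (Set.range fun j : {j : Fin K // j ≠ Istar} => C j q) :=
    fun q => Set.Finite.bddBelow (Set.finite_range _)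
  have hΓle : ∀ q, ∀ j, j ≠ Istar → Γ q ≤ C j q := fun q j hj => by
    rw [hΓdef]; exact ciInf_le (hbdd q) ⟨j, hj⟩
  have hΓatt : ∀ q, ∃ j, j ≠ Istar ∧ C j q = Γ q := fun q => by
    obtain ⟨⟨j, hj⟩, e⟩ :=
      exists_eq_ciInf_of_finite (f := fun j : {j : Fin K // j ≠ Istar} => C j q)
    exact ⟨j, hj, by rw [hΓdef]; exact e⟩
  have hΓp : 0 < Γ p := by
    obtain ⟨j, hj, e⟩ := hΓatt p
    rw [← e]; exact hCppos j hj
  -- Euler identity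
  have hDne : ∀ j, a * p j + bf j * p Istar ≠ 0 := fun j => (hD j).ne'
  have hEuler : ∀ j, gI j * p Istar + gJ j * p j = C j p := fun j => by
    rw [hCp, hgI_def, hgJ_def]
    simp only [hDf_def]
    field_simp [hDne j]
  -- sum formula for g
  have hsumg : ∀ j, j ≠ Istar → ∀ q : Fin K → ℝ,
      ∑ i, g j i * q i = gI j * q Istar + gJ j * q j := by
    intro j hj q
    rw [show (Finset.univ : Finset (Fin K)) = insert Istar (insert j (univ \ {Istar, j})) from ?_]
    · rw [Finset.sum_insert, Finset.sum_insert]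
      · have : ∑ i ∈ univ \ {Istar, j}, g j i * q i = 0 := by
          apply Finset.sum_eq_zero
          intro i hi
          simp only [Finset.mem_sdiff, Finset.mem_insert, Finset.mem_singleton] at hi
          push_neg at hi
          simp only [hg_def, if_neg hi.2.1, if_neg hi.2.2, zero_mul]
        rw [this, add_zero]
        simp [hg_def, if_neg hj]
      · simp
      · simp [Ne.symm hj]
    · ext i
      by_cases hi1 : i = Istar <;> by_cases hi2 : i = j <;> simp [hi1, hi2]
  -- superlinearity
  have hsuper : ∀ j, j ≠ Istar → ∀ q : Fin K → ℝ, (∀ i, 0 ≤ q i) →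
      C j q ≤ gI j * q Istar + gJ j * q j := by
    intro j hj q hq
    rw [hC, hgI_def, hgJ_def]
    simp only [hΔf_def, hDf_def, ha_def, hbf_def]
    exact aux_super _ _ _ _ _ _ _ (pow_pos (hσ Istar) 2) (pow_pos (hσ j) 2)
      (sq_nonneg _) (hp Istar) (hp j) (hq Istar) (hq j)
  -- relation between h and g
  have hh_def : ∀ j i, h j i =
      (if i = Istar then (σ Istar ^ 2 / p Istar) / (σ Istar ^ 2 / p Istar + σ j ^ 2 / p j)
       else if i = j then (σ j ^ 2 / p j) / (σ Istar ^ 2 / p Istar + σ j ^ 2 / p j)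
       else 0) := fun _ _ => rfl
  have hhC : ∀ j, j ≠ Istar → ∀ i, h j i * C j p = p i * g j i := by
    intro j hj i
    have hpI := (hp Istar).ne'
    have hpj := (hp j).ne'
    have hden : (σ Istar ^ 2 / p Istar + σ j ^ 2 / p j) ≠ 0 :=
      (add_pos (div_pos (pow_pos (hσ Istar) 2) (hp Istar))
        (div_pos (pow_pos (hσ j) 2) (hp j))).ne'
    have hD2 : σ Istar ^ 2 * p j + σ j ^ 2 * p Istar ≠ 0 := hDne j
    rw [hh_def, hCp]
    simp only [hg_def, hgI_def, hgJ_def, hΔf_def, hDf_def, ha_def, hbf_def]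
    by_cases hi1 : i = Istar
    · rw [if_pos hi1, if_pos hi1, hi1]
      field_simp [hD2]
    · rw [if_neg hi1, if_neg hi1]
      by_cases hi2 : i = j
      · rw [if_pos hi2, if_pos hi2, hi2]
        field_simp [hD2]
      · rw [if_neg hi2, if_neg hi2, mul_zero, zero_mul]
  constructor
  · -- forward direction
    intro hmax
    classical
    set A' : Finset (Fin K) := univ.filter (fun j => j ≠ Istar ∧ C j p = Γ p) with hA'_def
    have hmemA : ∀ j, j ∈ A' ↔ (j ≠ Istar ∧ C j p = Γ p) := fun j => by
      simp [hA'_def]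
    have hIA : Istar ∉ A' := fun hmem => ((hmemA Istar).1 hmem).1 rfl
    set G : Fin K → (Fin K → ℝ) := fun j => fun i => g j i - (∑ k, g j k) / K with hG_def
    set W : Set (Fin K → ℝ) :=
      {w | (∀ j, 0 ≤ w j) ∧ (∀ j, j ∉ A' → w j = 0) ∧ ∑ j, w j = 1} with hW_def
    set Φ : (Fin K → ℝ) → (Fin K → ℝ) := fun w => ∑ j, w j • G j with hPhi_def
    by_cases h0 : (0 : Fin K → ℝ) ∈ Φ '' W
    · -- the KKT vector exists
      obtain ⟨w, hwW, hw0⟩ := h0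
      obtain ⟨hw1, hw2, hw3⟩ := hwW
      have hwI : w Istar = 0 := hw2 Istar hIA
      have hr : ∀ i, ∑ j, w j * g j i = ∑ j, w j * ((∑ k, g j k) / K) := by
        intro i
        have h1 := congrFun hw0 i
        simp only [hPhi_def, hG_def, Finset.sum_apply, Pi.smul_apply, smul_eq_mul,
          Pi.zero_apply] at h1
        simp only [mul_sub, Finset.sum_sub_distrib] at h1
        linarith
      have e1 : ∀ j, w j * (∑ i, g j i * p i) = w j * Γ p := by
        intro j
        by_cases hwj : w j = 0
        · simp [hwj]
        · have hjA : j ∈ A' := by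
            by_contra hc
            exact hwj (hw2 j hc)
          obtain ⟨hj, hact⟩ := (hmemA j).1 hjA
          rw [hsumg j hj p, hEuler j, hact]
      have e2 : ∑ i, (∑ j, w j * g j i) * p i = Γ p := by
        calc ∑ i, (∑ j, w j * g j i) * p i
            = ∑ i, ∑ j, w j * (g j i * p i) := by
              apply Finset.sum_congr rfl
              intro i _
              rw [Finset.sum_mul]
              apply Finset.sum_congr rfl
              intro j _
              ring
          _ = ∑ j, w j * (∑ i, g j i * p i) := by
              rw [Finset.sum_comm]
              simp_rw [Finset.mul_sum]
          _ = ∑ j, w j * Γ p := Finset.sum_congr rfl fun j _ => e1 j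
          _ = Γ p := by rw [← Finset.sum_mul, hw3, one_mul]
      have hrΓ : (∑ j, w j * ((∑ k, g j k) / K)) = Γ p := by
        have e3 : ∑ i, (∑ j, w j * g j i) * p i
            = (∑ j, w j * ((∑ k, g j k) / K)) * ∑ i, p i := by
          rw [Finset.mul_sum]
          apply Finset.sum_congr rfl
          intro i _
          rw [hr i]
        rw [hsum, mul_one] at e3
        rw [← e3, e2]
      have hkeyF : ∀ i, ∑ j, w j * g j i = Γ p := fun i => by rw [hr i, hrΓ]
      have hfilter : ∀ F : Fin K → ℝ, ∑ j ∈ univ.filter (· ≠ Istar), w j * F j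
          = ∑ j, w j * F j := by
        intro F
        rw [Finset.filter_ne']
        exact Finset.sum_erase _ (by rw [hwI, zero_mul])
      refine ⟨w, fun j _ => hw1 j, ?_, ?_, ?_⟩
      · rw [Finset.filter_ne']
        rw [Finset.sum_erase _ hwI, hw3]
      · intro i
        have hterm : ∀ j, j ≠ Istar → w j * h j i * Γ p = w j * (p i * g j i) := by
          intro j hj
          by_cases hwj : w j = 0
          · rw [hwj, zero_mul, zero_mul, zero_mul]
          · have hjA : j ∈ A' := by
              by_contra hc
              exact hwj (hw2 j hc)
            obtain ⟨_, hact⟩ := (hmemA j).1 hjA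
            rw [← hact, mul_assoc, hhC j hj i]
        have hsum2 : (∑ j ∈ univ.filter (· ≠ Istar), w j * h j i) * Γ p = p i * Γ p := by
          rw [Finset.sum_mul]
          have : ∀ j ∈ univ.filter (· ≠ Istar), w j * h j i * Γ p = w j * (p i * g j i) := by
            intro j hjm
            exact hterm j (by simpa using (Finset.mem_filter.mp hjm).2)
          rw [Finset.sum_congr rfl this]
          have : ∑ j ∈ univ.filter (· ≠ Istar), w j * (p i * g j i)
              = p i * ∑ j ∈ univ.filter (· ≠ Istar), w j * g j i := by
            rw [Finset.mul_sum]
            apply Finset.sum_congr rfl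
            intro j _
            ring
          rw [this, hfilter, hkeyF i]
        exact (mul_right_cancel₀ hΓp.ne' hsum2).symm
      · intro j hj
        by_cases hwj : w j = 0
        · rw [hwj, zero_mul]
        · have hjA : j ∈ A' := by
            by_contra hc
            exact hwj (hw2 j hc)
          obtain ⟨_, hact⟩ := (hmemA j).1 hjA
          rw [hact, sub_self, mul_zero]
    · -- separation and contradiction with maximality
      exfalso
      have hTconv : Convex ℝ (Φ '' W) := by
        rintro x ⟨wx, hwx, rfl⟩ y ⟨wy, hwy, rfl⟩ sl tl hs ht hst
        refine ⟨fun j => sl * wx j + tl * wy j, ⟨?_, ?_, ?_⟩, ?_⟩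
        · intro j
          exact add_nonneg (mul_nonneg hs (hwx.1 j)) (mul_nonneg ht (hwy.1 j))
        · intro j hj
          show sl * wx j + tl * wy j = 0
          rw [hwx.2.1 j hj, hwy.2.1 j hj, mul_zero, mul_zero, add_zero]
        · show ∑ j, (sl * wx j + tl * wy j) = 1
          rw [Finset.sum_add_distrib, ← Finset.mul_sum, ← Finset.mul_sum,
            hwx.2.2, hwy.2.2, mul_one, mul_one, hst]
        · funext i
          simp only [hPhi_def, Finset.sum_apply, Pi.smul_apply, Pi.add_apply, smul_eq_mul]
          rw [Finset.mul_sum, Finset.mul_sum, ← Finset.sum_add_distrib]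
          apply Finset.sum_congr rfl
          intro j _
          ring
      have hWcompact : IsCompact W := by
        have hsub : W ⊆ stdSimplex ℝ (Fin K) := fun w hw => ⟨hw.1, hw.2.2⟩
        have h1 : IsClosed {w : Fin K → ℝ | ∀ j, 0 ≤ w j} := by
          rw [Set.setOf_forall]
          exact isClosed_iInter fun j => isClosed_le continuous_const (continuous_apply j)
        have h2 : IsClosed {w : Fin K → ℝ | ∀ j, j ∉ A' → w j = 0} := by
          rw [Set.setOf_forall]
          refine isClosed_iInter fun j => ?_
          by_cases hj : j ∈ A'
          · simp [hj]
          · simpa [hj] using isClosed_eq (continuous_apply j) (continuous_const : Continuous fun _ : Fin K → ℝ => (0:ℝ))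
        have h3 : IsClosed {w : Fin K → ℝ | ∑ j, w j = 1} :=
          isClosed_eq (continuous_finset_sum _ fun j _ => continuous_apply j) continuous_const
        have hclosed : IsClosed W := h1.inter (h2.inter h3)
        exact IsCompact.of_isClosed_subset (isCompact_stdSimplex _ _) hclosed hsub
      have hPhicont : Continuous Φ :=
        continuous_finset_sum _ fun j _ => (continuous_apply j).smul continuous_const
      have hTclosed : IsClosed (Φ '' W) := (hWcompact.image hPhicont).isClosed
      obtain ⟨f, u, hfu, hfT⟩ := geometric_hahn_banach_point_closed hTconv hTclosed h0
      have hu : 0 < u := by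
        have := map_zero f
        linarith [hfu, this.symm ▸ hfu]
      have hGmem : ∀ j ∈ A', G j ∈ Φ '' W := by
        intro j hjA
        refine ⟨fun k => if k = j then 1 else 0, ⟨?_, ?_, ?_⟩, ?_⟩
        · intro k
          show (0:ℝ) ≤ if k = j then 1 else 0
          split <;> norm_num
        · intro k hk
          have hkj : k ≠ j := fun hkj => hk (hkj ▸ hjA)
          show (if k = j then (1:ℝ) else 0) = 0
          rw [if_neg hkj]
        · simp
        · simp only [hPhi_def, ite_smul, one_smul, zero_smul]
          rw [Finset.sum_ite_eq' univ j]
          simp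
      have hGj : ∀ j ∈ A', 0 < f (G j) := by
        intro j hjA
        have := hfT _ (hGmem j hjA)
        have h0f : f 0 = 0 := map_zero f
        linarith [hfu]
      -- linear functional as a sum
      set c : Fin K → ℝ := fun i => f (fun k => if i = k then (1:ℝ) else 0) with hc_def
      have hfx : ∀ x : Fin K → ℝ, f x = ∑ i, x i * c i := by
        intro x
        conv_lhs => rw [pi_eq_sum_univ x]
        rw [map_sum]
        apply Finset.sum_congr rfl
        intro i _
        rw [map_smul, smul_eq_mul, hc_def]
      have hK0 : (0:ℝ) < (K:ℝ) := by
        have : 0 < K := by omega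
        exact_mod_cast this
      set d : Fin K → ℝ := fun i => c i - (∑ k, c k) / K with hd_def
      have hd0 : ∑ i, d i = 0 := by
        simp only [hd_def, Finset.sum_sub_distrib]
        rw [Finset.sum_const, Finset.card_univ, Fintype.card_fin, nsmul_eq_mul]
        field_simp
        ring
      have hder : ∀ j ∈ A', 0 < gI j * d Istar + gJ j * d j := by
        intro j hjA
        have hj : j ≠ Istar := ((hmemA j).1 hjA).1
        have h2 : ∑ i, g j i * d i = f (G j) := by
          rw [hfx (G j)]
          simp only [hG_def, hd_def]
          simp only [mul_sub, sub_mul, Finset.sum_sub_distrib]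
          congr 1
          rw [← Finset.sum_mul, ← Finset.mul_sum]
          ring
        rw [← hsumg j hj d, h2]
        exact hGj j hjA
      -- move along d
      have hCline : ∀ j (t : ℝ), C j (p + t • d)
          = Δf j * (p Istar + t * d Istar) * (p j + t * d j) /
            (2 * (a * (p j + t * d j) + bf j * (p Istar + t * d Istar))) := fun j t => rfl
      have hDne2 : ∀ j, (2:ℝ) * (a * p j + bf j * p Istar) ≠ 0 := fun j => by
        have := hD j
        simp only [hDf_def] at this
        positivity
      have evP : ∀ᶠ t in 𝓝[>] (0:ℝ), ∀ i ∈ (univ : Finset (Fin K)), 0 < p i + t * d i := by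
        rw [eventually_all_finset]
        intro i _
        have hcont : ContinuousAt (fun t : ℝ => p i + t * d i) 0 := by fun_prop
        have h00 : (0:ℝ) < p i + 0 * d i := by simpa using hp i
        have h1 : ∀ᶠ t in 𝓝 (0:ℝ), p i + t * d i ∈ Set.Ioi (0:ℝ) :=
          hcont (Ioi_mem_nhds h00)
        exact (h1.filter_mono nhdsWithin_le_nhds).mono fun t ht => ht
      have evC : ∀ᶠ t in 𝓝[>] (0:ℝ), ∀ j ∈ univ.filter (· ≠ Istar), Γ p < C j (p + t • d) := by
        rw [eventually_all_finset]
        intro j hjm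
        have hj : j ≠ Istar := by simpa using (Finset.mem_filter.mp hjm).2
        have heq : (fun t : ℝ => C j (p + t • d)) = fun t : ℝ =>
            Δf j * (p Istar + t * d Istar) * (p j + t * d j) /
              (2 * (a * (p j + t * d j) + bf j * (p Istar + t * d Istar))) :=
          funext fun t => hCline j t
        by_cases hact : C j p = Γ p
        · have hjA : j ∈ A' := (hmemA j).2 ⟨hj, hact⟩
          have hderiv : HasDerivAt (fun t : ℝ => C j (p + t • d))
              (gI j * d Istar + gJ j * d j) 0 := by
            rw [heq]
            have haux := aux_deriv (Δf j) a (bf j) (p Istar) (p j) (d Istar) (d j) (hDne2 j)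
            convert haux using 2
          have hval : C j (p + (0:ℝ) • d) = Γ p := by
            rw [← hact]
            norm_num
          have hev := aux_incr hderiv (hder j hjA)
          refine hev.mono fun t ht => ?_
          calc Γ p = C j (p + (0:ℝ) • d) := hval.symm
            _ < C j (p + t • d) := ht
        · have hlt : Γ p < C j p :=
            lt_of_le_of_ne (hΓle p j hj) (fun e => hact e.symm)
          have hcont : ContinuousAt (fun t : ℝ => C j (p + t • d)) 0 := by
            rw [heq]
            apply ContinuousAt.div
            · fun_prop
            · fun_prop
            · simpa using hDne2 j
          have h00 : C j (p + (0:ℝ) • d) = C j p := by norm_num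
          have h1 : ∀ᶠ t in 𝓝 (0:ℝ), C j (p + t • d) ∈ Set.Ioi (Γ p) :=
            hcont (Ioi_mem_nhds (by rw [show (fun t : ℝ => C j (p + t • d)) 0 = C j p from h00]; exact hlt))
          exact (h1.filter_mono nhdsWithin_le_nhds).mono fun t ht => ht
      obtain ⟨t, ht1, ht2⟩ := (evC.and evP).exists
      have hqS : (p + t • d) ∈ S := by
        refine ⟨fun i => (ht2 i (Finset.mem_univ i)).le, ?_⟩
        show ∑ i, (p i + t * d i) = 1
        rw [Finset.sum_add_distrib, ← Finset.mul_sum, hd0, mul_zero, add_zero, hsum]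
      have hle : Γ (p + t • d) ≤ Γ p := hmax hqS
      obtain ⟨j1, hj1, e1⟩ := hΓatt (p + t • d)
      have hgt := ht1 j1 (Finset.mem_filter.mpr ⟨Finset.mem_univ _, hj1⟩)
      rw [e1] at hgt
      exact absurd hle (not_le.mpr hgt)
  · -- reverse direction
    rintro ⟨μ, hμ0, hμ1, hstat, hcs⟩
    intro q hq
    obtain ⟨hq0, hq1⟩ := hq
    have hkey : ∀ i, (∑ j ∈ univ.filter (· ≠ Istar), μ j * g j i) = Γ p := by
      intro i
      have h1 : ∀ j ∈ univ.filter (· ≠ Istar),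
          μ j * g j i * p i = Γ p * (μ j * h j i) := by
        intro j hjm
        have hj : j ≠ Istar := by simpa using (Finset.mem_filter.mp hjm).2
        linear_combination (-(μ j)) * hhC j hj i - h j i * hcs j hj
      have h2 : (∑ j ∈ univ.filter (· ≠ Istar), μ j * g j i) * p i = Γ p * p i := by
        rw [Finset.sum_mul]
        rw [Finset.sum_congr rfl h1, ← Finset.mul_sum, ← hstat i]
      exact mul_right_cancel₀ (hp i).ne' h2
    calc Γ q = ∑ j ∈ univ.filter (· ≠ Istar), μ j * Γ q := by
          rw [← Finset.sum_mul, hμ1, one_mul]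
      _ ≤ ∑ j ∈ univ.filter (· ≠ Istar), μ j * C j q := by
          apply Finset.sum_le_sum
          intro j hjm
          have hj : j ≠ Istar := by simpa using (Finset.mem_filter.mp hjm).2
          exact mul_le_mul_of_nonneg_left (hΓle q j hj) (hμ0 j hj)
      _ ≤ ∑ j ∈ univ.filter (· ≠ Istar), μ j * ∑ i, g j i * q i := by
          apply Finset.sum_le_sum
          intro j hjm
          have hj : j ≠ Istar := by simpa using (Finset.mem_filter.mp hjm).2
          rw [hsumg j hj q]
          exact mul_le_mul_of_nonneg_left (hsuper j hj q hq0) (hμ0 j hj)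
      _ = ∑ i, (∑ j ∈ univ.filter (· ≠ Istar), μ j * g j i) * q i := by
          simp_rw [Finset.mul_sum]
          rw [Finset.sum_comm]
          simp_rw [Finset.sum_mul, mul_assoc]
      _ = Γ p := by
          simp_rw [hkey]
          rw [← Finset.mul_sum, hq1, mul_one]
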